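/- For every α > 1 the set D_feas is compact, and the segment [−1,1] × {0} is contained in D_feas. Moreover, if α ≥ 2 then there exists z > 0 such that D_feas ⊆ [−1,1] × [0,z], and the intersection of D_feas with the vertical line {(s,r) ∈ ℝ² : s = 1} is exactly the single point {(1,0)}. -/

import Mathlib

open MeasureTheory ProbabilityTheory Filter Real
open scoped ENNReal NNReal

noncomputable section

/-- The standard Gaussian measure `N(0,1)` on `ℝ`. -/
def stdGaussian : Measure ℝ := gaussianReal 0 1

instance : IsProbabilityMeasure stdGaussian :=
  inferInstanceAs (IsProbabilityMeasure (gaussianReal 0 1))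

lemma stdGaussian_eq :
    _root_.stdGaussian = (volume : Measure ℝ).withDensity (gaussianPDF 0 1) :=
  gaussianReal_of_var_ne_zero 0 one_ne_zero

lemma integral_stdGaussian_eq (g : ℝ → ℝ) :
    ∫ x, g x ∂stdGaussian = ∫ x, gaussianPDFReal 0 1 x * g x := by
  rw [stdGaussian_eq]
  have h1 : (volume : Measure ℝ).withDensity (gaussianPDF 0 1)
      = (volume : Measure ℝ).withDensity (fun x => ((gaussianPDFReal 0 1 x).toNNReal : ℝ≥0∞)) := rfl
  rw [h1, integral_withDensity_eq_integral_smul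
    ((measurable_gaussianPDFReal 0 1).real_toNNReal) g]
  congr 1 with x
  simp [NNReal.smul_def, Real.coe_toNNReal _ (gaussianPDFReal_nonneg 0 1 x)]

lemma integrable_stdGaussian_iff (g : ℝ → ℝ) :
    Integrable g stdGaussian ↔ Integrable (fun x => g x * gaussianPDFReal 0 1 x) volume := by
  rw [stdGaussian_eq, integrable_withDensity_iff (measurable_gaussianPDF 0 1)
    (ae_of_all _ fun x => ENNReal.ofReal_lt_top)]
  simp_rw [gaussianPDF, ENNReal.toReal_ofReal (gaussianPDFReal_nonneg 0 1 _)]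

lemma gaussianPDFReal_zero_one (x : ℝ) :
    gaussianPDFReal 0 1 x = (Real.sqrt (2 * π))⁻¹ * Real.exp (-2⁻¹ * x ^ 2) := by
  rw [gaussianPDFReal_def]
  push_cast
  rw [show (-(x - 0)^2/(2*(1:ℝ))) = -2⁻¹ * x^2 by ring, mul_one]

lemma gaussianPDFReal_zero_one_even (x : ℝ) :
    gaussianPDFReal 0 1 (-x) = gaussianPDFReal 0 1 x := by
  simp only [gaussianPDFReal_zero_one, neg_sq]

lemma integrable_sq_pdf :
    Integrable (fun x : ℝ => x ^ 2 * gaussianPDFReal 0 1 x) volume := by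
  have h := integrable_rpow_mul_exp_neg_mul_sq (b := 2⁻¹) (by norm_num) (s := 2) (by norm_num)
  have h2 := (h.const_mul ((Real.sqrt (2 * π))⁻¹))
  refine h2.congr (Filter.Eventually.of_forall fun x => ?_)
  simp only [gaussianPDFReal_zero_one]
  rw [show ((2:ℝ) : ℝ) = ((2:ℕ) : ℝ) by norm_num, Real.rpow_natCast]
  ring

lemma integrable_sq_stdGaussian : Integrable (fun x : ℝ => x ^ 2) stdGaussian := by
  rw [integrable_stdGaussian_iff]
  exact integrable_sq_pdf

lemma integral_sq_stdGaussian : ∫ x, x ^ 2 ∂stdGaussian = 1 := by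
  rw [integral_stdGaussian_eq]
  have hint : Integrable (fun x : ℝ => gaussianPDFReal 0 1 x * x ^ 2) volume :=
    integrable_sq_pdf.congr (Filter.Eventually.of_forall fun x => by ring)
  have hsplit := intervalIntegral.integral_Iic_add_Ioi (b := (0:ℝ)) (μ := volume)
    hint.integrableOn hint.integrableOn
  have heven : ∫ x in Set.Iic (0:ℝ), gaussianPDFReal 0 1 x * x ^ 2
      = ∫ x in Set.Ioi (0:ℝ), gaussianPDFReal 0 1 x * x ^ 2 := by
    have hh := integral_comp_neg_Iic (0:ℝ) (fun x => gaussianPDFReal 0 1 x * x ^ 2)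
    simp only [neg_zero] at hh
    rw [← hh]
    refine setIntegral_congr_fun measurableSet_Iic (fun x _ => ?_)
    simp only [gaussianPDFReal_zero_one_even, neg_sq]
  have hIoi : ∫ x in Set.Ioi (0:ℝ), gaussianPDFReal 0 1 x * x ^ 2
      = (Real.sqrt (2 * π))⁻¹ * ((2⁻¹ : ℝ) ^ (-(3:ℝ)/2) * (1/2) * Real.Gamma (3/2)) := by
    have : ∀ x ∈ Set.Ioi (0:ℝ), gaussianPDFReal 0 1 x * x ^ 2
        = (Real.sqrt (2 * π))⁻¹ * (x ^ ((2:ℝ)) * Real.exp (-2⁻¹ * x ^ ((2:ℝ)))) := by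
      intro x _
      rw [gaussianPDFReal_zero_one,
        show ((2:ℝ) : ℝ) = ((2:ℕ) : ℝ) by norm_num, Real.rpow_natCast]
      ring
    rw [setIntegral_congr_fun measurableSet_Ioi this, integral_const_mul,
      integral_rpow_mul_exp_neg_mul_rpow (by norm_num) (by norm_num) (by norm_num)]
    norm_num
  rw [← hsplit, heven, hIoi]
  have hG : Real.Gamma (3/2) = Real.sqrt π / 2 := by
    have : (3:ℝ)/2 = 1/2 + 1 := by norm_num
    rw [this, Real.Gamma_add_one (by norm_num), Real.Gamma_one_half_eq]
    ring
  have h2 : ((2:ℝ)⁻¹ : ℝ) ^ (-(3:ℝ)/2) = 2 * Real.sqrt 2 := by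
    rw [Real.inv_rpow (by norm_num : (0:ℝ) ≤ 2), ← Real.rpow_neg (by norm_num : (0:ℝ) ≤ 2)]
    rw [show (-(-(3:ℝ)/2)) = 1 + 1/2 by norm_num, Real.rpow_add (by norm_num : (0:ℝ) < 2),
      Real.rpow_one, ← Real.sqrt_eq_rpow]
  rw [hG, h2]
  have hs2 : Real.sqrt (2*π) = Real.sqrt 2 * Real.sqrt π := Real.sqrt_mul (by norm_num) _
  rw [hs2]
  have hπ : 0 < Real.sqrt π := Real.sqrt_pos.mpr Real.pi_pos
  have h2' : 0 < Real.sqrt 2 := Real.sqrt_pos.mpr (by norm_num)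
  have hss : Real.sqrt 2 * Real.sqrt 2 = 2 := Real.mul_self_sqrt (by norm_num)
  field_simp
  norm_num

lemma stdGaussian_map_neg : _root_.stdGaussian.map (fun x => -x) = _root_.stdGaussian := by
  have h := gaussianReal_map_const_mul (μ := 0) (v := 1) (-1)
  have h2 : (NNReal.mk ((-1:ℝ)^2) (sq_nonneg _) : ℝ≥0) = 1 := by
    apply NNReal.eq; show (-1:ℝ)^2 = 1; norm_num
  simp only [neg_one_mul, mul_zero, h2, one_mul] at h
  exact h

lemma integrable_id_stdGaussian : Integrable (fun x : ℝ => x) stdGaussian := by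
  refine ((integrable_const (1:ℝ)).add integrable_sq_stdGaussian).mono
    measurable_id.aestronglyMeasurable (Filter.Eventually.of_forall fun x => ?_)
  simp only [Real.norm_eq_abs, Pi.add_apply]
  rw [abs_of_nonneg (by positivity : (0:ℝ) ≤ 1 + x^2)]
  nlinarith [abs_nonneg x, sq_abs x]

lemma integral_id_stdGaussian : ∫ x, x ∂stdGaussian = 0 := by
  have h : ∫ x, x ∂stdGaussian = ∫ x, -x ∂stdGaussian := by
    conv_lhs => rw [← stdGaussian_map_neg]
    rw [integral_map (f := fun x : ℝ => x) (φ := fun x : ℝ => -x)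
      (measurable_neg.aemeasurable) measurable_id.aestronglyMeasurable]
  rw [integral_neg] at h
  linarith

lemma integrable_fst_sq :
    Integrable (fun p : ℝ × ℝ => p.1 ^ 2) (stdGaussian.prod stdGaussian) := by
  have := integrable_sq_stdGaussian.mul_prod (integrable_const (1:ℝ))
    (ν := stdGaussian)
  simpa using this

lemma integrable_snd_sq :
    Integrable (fun p : ℝ × ℝ => p.2 ^ 2) (stdGaussian.prod stdGaussian) := by
  have := (integrable_const (1:ℝ)).mul_prod integrable_sq_stdGaussian
    (μ := stdGaussian)
  simpa using this

lemma integrable_cross :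
    Integrable (fun p : ℝ × ℝ => p.1 * p.2) (stdGaussian.prod stdGaussian) :=
  integrable_id_stdGaussian.mul_prod integrable_id_stdGaussian

lemma integral_fst_sq :
    ∫ p : ℝ × ℝ, p.1 ^ 2 ∂(stdGaussian.prod stdGaussian) = 1 := by
  have := integral_prod_mul (μ := stdGaussian) (ν := stdGaussian)
    (fun x : ℝ => x ^ 2) (fun _ : ℝ => (1:ℝ))
  simpa [integral_sq_stdGaussian] using this

lemma integral_snd_sq :
    ∫ p : ℝ × ℝ, p.2 ^ 2 ∂(stdGaussian.prod stdGaussian) = 1 := by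
  have := integral_prod_mul (μ := stdGaussian) (ν := stdGaussian)
    (fun _ : ℝ => (1:ℝ)) (fun x : ℝ => x ^ 2)
  simpa [integral_sq_stdGaussian] using this

lemma integral_cross :
    ∫ p : ℝ × ℝ, p.1 * p.2 ∂(stdGaussian.prod stdGaussian) = 0 := by
  have := integral_prod_mul (μ := stdGaussian) (ν := stdGaussian)
    (fun x : ℝ => x) (fun x : ℝ => x)
  simpa [integral_id_stdGaussian] using this

lemma integrable_X (s r : ℝ) :
    Integrable (fun p : ℝ × ℝ => (r * p.2 + s * p.1) ^ 2) (stdGaussian.prod stdGaussian) := by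
  have h : (fun p : ℝ × ℝ => (r * p.2 + s * p.1) ^ 2)
      = fun p => r ^ 2 * p.2 ^ 2 + (2 * r * s) * (p.1 * p.2) + s ^ 2 * p.1 ^ 2 := by
    funext p; ring
  rw [h]
  exact ((integrable_snd_sq.const_mul _).add (integrable_cross.const_mul _)).add
    (integrable_fst_sq.const_mul _)

lemma integral_X (s r : ℝ) :
    ∫ p : ℝ × ℝ, (r * p.2 + s * p.1) ^ 2 ∂(stdGaussian.prod stdGaussian) = r ^ 2 + s ^ 2 := by
  have h : (fun p : ℝ × ℝ => (r * p.2 + s * p.1) ^ 2)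
      = fun p => r ^ 2 * p.2 ^ 2 + (2 * r * s) * (p.1 * p.2) + s ^ 2 * p.1 ^ 2 := by
    funext p; ring
  have hA : Integrable (fun p : ℝ × ℝ => r ^ 2 * p.2 ^ 2) (stdGaussian.prod stdGaussian) :=
    integrable_snd_sq.const_mul _
  have hB : Integrable (fun p : ℝ × ℝ => 2 * r * s * (p.1 * p.2)) (stdGaussian.prod stdGaussian) :=
    integrable_cross.const_mul _
  have hC : Integrable (fun p : ℝ × ℝ => s ^ 2 * p.1 ^ 2) (stdGaussian.prod stdGaussian) :=
    integrable_fst_sq.const_mul _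
  have hAB : Integrable (fun p : ℝ × ℝ => r ^ 2 * p.2 ^ 2 + 2 * r * s * (p.1 * p.2))
      (stdGaussian.prod stdGaussian) := hA.add hB
  rw [h, integral_add hAB hC, integral_add hA hB,
    integral_const_mul, integral_const_mul, integral_const_mul,
    integral_fst_sq, integral_snd_sq, integral_cross]
  ring

/-- `c_d(s,r) = E[(min{|q| - |r g + s q|, 0})²]` for independent standard Gaussians `q, g`. -/
def cd (s r : ℝ) : ℝ :=
  ∫ p : ℝ × ℝ, (min (|p.1| - |r * p.2 + s * p.1|) 0) ^ 2
    ∂(stdGaussian.prod stdGaussian)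

/-- The deterministic feasibility set `D_feas`. -/
def Dfeas (α : ℝ) : Set (ℝ × ℝ) := {p | 0 ≤ p.2 ∧ α * cd p.1 p.2 ≤ p.2 ^ 2}

lemma F_continuous (s r : ℝ) :
    Continuous (fun p : ℝ × ℝ => (min (|p.1| - |r * p.2 + s * p.1|) 0) ^ 2) := by
  fun_prop

lemma F_le (s r : ℝ) (p : ℝ × ℝ) :
    (min (|p.1| - |r * p.2 + s * p.1|) 0) ^ 2 ≤ (r * p.2 + s * p.1) ^ 2 := by
  set X := r * p.2 + s * p.1 with hX
  rcases le_total (|p.1| - |X|) 0 with h | h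
  · rw [min_eq_left h]
    nlinarith [abs_nonneg X, abs_nonneg p.1, sq_abs X, sq_abs p.1]
  · rw [min_eq_right h]
    simpa using sq_nonneg X

lemma F_ge (s r : ℝ) (p : ℝ × ℝ) :
    (r * p.2 + s * p.1) ^ 2 - 2 * |r * p.2 + s * p.1| * |p.1|
      ≤ (min (|p.1| - |r * p.2 + s * p.1|) 0) ^ 2 := by
  set X := r * p.2 + s * p.1 with hX
  rcases le_total (|p.1| - |X|) 0 with h | h
  · rw [min_eq_left h]
    nlinarith [abs_nonneg X, abs_nonneg p.1, sq_abs X, sq_abs p.1]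
  · rw [min_eq_right h]
    nlinarith [abs_nonneg X, abs_nonneg p.1, sq_abs X, sq_abs p.1]

lemma integrable_F (s r : ℝ) :
    Integrable (fun p : ℝ × ℝ => (min (|p.1| - |r * p.2 + s * p.1|) 0) ^ 2)
      (stdGaussian.prod stdGaussian) := by
  refine (integrable_X s r).mono (F_continuous s r).aestronglyMeasurable
    (Filter.Eventually.of_forall fun p => ?_)
  have h1 : ‖(min (|p.1| - |r * p.2 + s * p.1|) 0) ^ 2‖
      = (min (|p.1| - |r * p.2 + s * p.1|) 0) ^ 2 := Real.norm_of_nonneg (sq_nonneg _)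
  have h2 : ‖(r * p.2 + s * p.1) ^ 2‖ = (r * p.2 + s * p.1) ^ 2 :=
    Real.norm_of_nonneg (sq_nonneg _)
  rw [h1, h2]
  exact F_le s r p

lemma cd_nonneg (s r : ℝ) : 0 ≤ cd s r :=
  integral_nonneg fun p => sq_nonneg _

lemma cd_zero_of_abs_le (s : ℝ) (hs : |s| ≤ 1) : cd s 0 = 0 := by
  unfold cd
  have h : ∀ p : ℝ × ℝ, (min (|p.1| - |0 * p.2 + s * p.1|) 0) ^ 2 = 0 := by
    intro p
    have h1 : |0 * p.2 + s * p.1| ≤ |p.1| := by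
      rw [zero_mul, zero_add, abs_mul]
      calc |s| * |p.1| ≤ 1 * |p.1| := by
            exact mul_le_mul_of_nonneg_right hs (abs_nonneg _)
        _ = |p.1| := one_mul _
    rw [min_eq_right (by linarith)]
    norm_num
  simp only [h, integral_zero]

lemma cd_lower (s r ε : ℝ) (hε : 0 < ε) :
    (1 - ε) * (r ^ 2 + s ^ 2) - 1 / ε ≤ cd s r := by
  have hpt : ∀ p : ℝ × ℝ,
      (1 - ε) * (r * p.2 + s * p.1) ^ 2 - (1 / ε) * p.1 ^ 2
        ≤ (min (|p.1| - |r * p.2 + s * p.1|) 0) ^ 2 := by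
    intro p
    have h1 := F_ge s r p
    have h2 : 2 * |r * p.2 + s * p.1| * |p.1|
        ≤ ε * (r * p.2 + s * p.1) ^ 2 + (1 / ε) * p.1 ^ 2 := by
      have h3 := sq_nonneg (ε * |r * p.2 + s * p.1| - |p.1|)
      have key : ε * (ε * (r * p.2 + s * p.1) ^ 2 + (1 / ε) * p.1 ^ 2
          - 2 * |r * p.2 + s * p.1| * |p.1|)
          = (ε * |r * p.2 + s * p.1| - |p.1|) ^ 2 := by
        have hx : (r * p.2 + s * p.1) ^ 2 = |r * p.2 + s * p.1| ^ 2 := (sq_abs _).symm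
        have hy : p.1 ^ 2 = |p.1| ^ 2 := (sq_abs _).symm
        have hinv : ε * (1 / ε) = 1 := by field_simp
        linear_combination (ε ^ 2) * hx + hy + (p.1 ^ 2) * hinv
      rw [← key] at h3
      have h4 := (mul_nonneg_iff_of_pos_left hε).mp h3
      linarith
    linarith
  have hInt : Integrable (fun p : ℝ × ℝ =>
      (1 - ε) * (r * p.2 + s * p.1) ^ 2 - (1 / ε) * p.1 ^ 2) (stdGaussian.prod stdGaussian) :=
    ((integrable_X s r).const_mul _).sub (integrable_fst_sq.const_mul _)
  have := integral_mono hInt (integrable_F s r) hpt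
  rw [integral_sub ((integrable_X s r).const_mul _) (integrable_fst_sq.const_mul _),
    integral_const_mul, integral_const_mul, integral_X, integral_fst_sq] at this
  calc (1 - ε) * (r ^ 2 + s ^ 2) - 1 / ε
      = (1 - ε) * (r ^ 2 + s ^ 2) - 1 / ε * 1 := by ring
    _ ≤ cd s r := this

lemma continuous_cd : Continuous (fun x : ℝ × ℝ => cd x.1 x.2) := by
  rw [continuous_iff_continuousAt]
  intro x₀
  set M : ℝ := |x₀.1| + |x₀.2| + 1 with hM
  have hM0 : 0 < M := by positivity
  apply continuousAt_of_dominated (bound := fun p : ℝ × ℝ => 2 * M ^ 2 * (p.1 ^ 2 + p.2 ^ 2))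
  · exact Filter.Eventually.of_forall fun x =>
      (F_continuous x.1 x.2).aestronglyMeasurable
  · refine Filter.eventually_of_mem (Metric.ball_mem_nhds x₀ one_pos) fun x hx => ?_
    refine Filter.Eventually.of_forall fun p => ?_
    have hx1 : |x.1| ≤ M := by
      have h1 : |x.1 - x₀.1| ≤ ‖x - x₀‖ := by
        calc |x.1 - x₀.1| = ‖(x - x₀).1‖ := rfl
          _ ≤ ‖x - x₀‖ := norm_fst_le _
      have h2 : ‖x - x₀‖ < 1 := by simpa [dist_eq_norm] using hx
      calc |x.1| ≤ |x₀.1| + |x.1 - x₀.1| := by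
            have := abs_sub_abs_le_abs_sub x.1 x₀.1; linarith [abs_sub_comm x.1 x₀.1]
        _ ≤ M := by simp only [hM]; linarith [abs_nonneg x₀.2]
    have hx2 : |x.2| ≤ M := by
      have h1 : |x.2 - x₀.2| ≤ ‖x - x₀‖ := by
        calc |x.2 - x₀.2| = ‖(x - x₀).2‖ := rfl
          _ ≤ ‖x - x₀‖ := norm_snd_le _
      have h2 : ‖x - x₀‖ < 1 := by simpa [dist_eq_norm] using hx
      calc |x.2| ≤ |x₀.2| + |x.2 - x₀.2| := by
            have := abs_sub_abs_le_abs_sub x.2 x₀.2; linarith [abs_sub_comm x.2 x₀.2]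
        _ ≤ M := by simp only [hM]; linarith [abs_nonneg x₀.1]
    rw [Real.norm_of_nonneg (sq_nonneg _)]
    calc (min (|p.1| - |x.2 * p.2 + x.1 * p.1|) 0) ^ 2
        ≤ (x.2 * p.2 + x.1 * p.1) ^ 2 := F_le x.1 x.2 p
      _ ≤ 2 * M ^ 2 * (p.1 ^ 2 + p.2 ^ 2) := by
          nlinarith [sq_abs x.1, sq_abs x.2, sq_nonneg (x.2 * p.2 - x.1 * p.1),
            sq_nonneg (x.1 * p.2), sq_nonneg (x.2 * p.1), abs_nonneg x.1, abs_nonneg x.2,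
            mul_le_mul hx1 hx1 (abs_nonneg x.1) (le_of_lt hM0),
            mul_le_mul hx2 hx2 (abs_nonneg x.2) (le_of_lt hM0),
            sq_nonneg p.1, sq_nonneg p.2]
  · exact (integrable_fst_sq.add integrable_snd_sq).const_mul _
  · refine Filter.Eventually.of_forall fun p => ?_
    have : Continuous fun x : ℝ × ℝ => (min (|p.1| - |x.2 * p.2 + x.1 * p.1|) 0) ^ 2 := by
      fun_prop
    exact this.continuousAt

lemma prod_map_neg_snd :
    (stdGaussian.prod stdGaussian).map (fun p : ℝ × ℝ => (p.1, -p.2))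
      = stdGaussian.prod stdGaussian := by
  have h : (fun p : ℝ × ℝ => (p.1, -p.2)) = Prod.map id (fun x : ℝ => -x) := rfl
  have hgneg : Measurable (fun x : ℝ => -x) := measurable_neg
  rw [h, ← Measure.map_prod_map _ _ measurable_id hgneg, Measure.map_id, stdGaussian_map_neg]

lemma integrable_F_neg (s r : ℝ) :
    Integrable (fun p : ℝ × ℝ => (min (|p.1| - |r * (-p.2) + s * p.1|) 0) ^ 2)
      (stdGaussian.prod stdGaussian) := by
  have hT : Measurable (fun p : ℝ × ℝ => (p.1, -p.2)) := measurable_fst.prodMk measurable_snd.neg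
  have h := (integrable_map_measure (F_continuous s r).aestronglyMeasurable
    hT.aemeasurable (μ := stdGaussian.prod stdGaussian)).mp
  rw [prod_map_neg_snd] at h
  exact h (integrable_F s r)

lemma cd_two_mul (s r : ℝ) :
    2 * cd s r = ∫ p : ℝ × ℝ, ((min (|p.1| - |r * p.2 + s * p.1|) 0) ^ 2
      + (min (|p.1| - |r * (-p.2) + s * p.1|) 0) ^ 2) ∂(stdGaussian.prod stdGaussian) := by
  have hT : Measurable (fun p : ℝ × ℝ => (p.1, -p.2)) := measurable_fst.prodMk measurable_snd.neg
  have h1 : cd s r = ∫ p : ℝ × ℝ, (min (|p.1| - |r * (-p.2) + s * p.1|) 0) ^ 2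
      ∂(stdGaussian.prod stdGaussian) := by
    unfold cd
    conv_lhs => rw [← prod_map_neg_snd]
    rw [integral_map hT.aemeasurable (F_continuous s r).aestronglyMeasurable]
  rw [integral_add (integrable_F s r) (integrable_F_neg s r), ← h1]
  unfold cd
  ring

lemma abs_pair (u v : ℝ) :
    (|u + v| = |u| + |v| ∧ |u - v| = |(|u| - |v|)|)
      ∨ (|u - v| = |u| + |v| ∧ |u + v| = |(|u| - |v|)|) := by
  rcases abs_cases u with ⟨h1, h2⟩ | ⟨h1, h2⟩ <;>
    rcases abs_cases v with ⟨h3, h4⟩ | ⟨h3, h4⟩ <;>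
    rcases abs_cases (u + v) with ⟨h5, h6⟩ | ⟨h5, h6⟩ <;>
    rcases abs_cases (u - v) with ⟨h7, h8⟩ | ⟨h7, h8⟩ <;>
    rcases abs_cases (|u| - |v|) with ⟨h9, h10⟩ | ⟨h9, h10⟩ <;>
    first
      | (left; constructor <;> linarith)
      | (right; constructor <;> linarith)

lemma pair_lower_box (s r : ℝ) (hr : 0 ≤ r) (hs : 1 ≤ |s|) (p : ℝ × ℝ) :
    (|s| - 1) ^ 2 * p.1 ^ 2 + r ^ 2 * p.2 ^ 2
      ≤ (min (|p.1| - |r * p.2 + s * p.1|) 0) ^ 2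
        + (min (|p.1| - |r * (-p.2) + s * p.1|) 0) ^ 2 := by
  have h1 : r * p.2 + s * p.1 = s * p.1 + r * p.2 := by ring
  have h2 : r * (-p.2) + s * p.1 = s * p.1 - r * p.2 := by ring
  rw [h1, h2]
  have habs : |s * p.1| = |s| * |p.1| := abs_mul s p.1
  have habs2 : |r * p.2| = r * |p.2| := by rw [abs_mul, abs_of_nonneg hr]
  have hcross : 0 ≤ 2 * ((|s| - 1) * |p.1|) * (r * |p.2|) :=
    mul_nonneg (mul_nonneg (by norm_num) (mul_nonneg (by linarith) (abs_nonneg _)))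
      (mul_nonneg hr (abs_nonneg _))
  have hc : |p.1| - (|s| * |p.1| + r * |p.2|) ≤ 0 := by
    nlinarith [abs_nonneg p.1, abs_nonneg p.2]
  rcases abs_pair (s * p.1) (r * p.2) with ⟨hA, _⟩ | ⟨hA, _⟩
  · rw [hA, habs, habs2, min_eq_left hc]
    nlinarith [sq_nonneg (min (|p.1| - |s * p.1 - r * p.2|) 0), sq_abs p.1, sq_abs p.2]
  · rw [hA, habs, habs2, min_eq_left hc]
    nlinarith [sq_nonneg (min (|p.1| - |s * p.1 + r * p.2|) 0), sq_abs p.1, sq_abs p.2]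

lemma pair_lower_one (r : ℝ) (hr : 0 ≤ r) (p : ℝ × ℝ) :
    r ^ 2 * p.2 ^ 2 + (max (r * |p.2| - 2 * |p.1|) 0) ^ 2
      ≤ (min (|p.1| - |r * p.2 + 1 * p.1|) 0) ^ 2
        + (min (|p.1| - |r * (-p.2) + 1 * p.1|) 0) ^ 2 := by
  have h1 : r * p.2 + 1 * p.1 = p.1 + r * p.2 := by ring
  have h2 : r * (-p.2) + 1 * p.1 = p.1 - r * p.2 := by ring
  rw [h1, h2]
  have habs2 : |r * p.2| = r * |p.2| := by rw [abs_mul, abs_of_nonneg hr]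
  have hc : |p.1| - (|p.1| + r * |p.2|) ≤ 0 := by
    nlinarith [abs_nonneg p.2]
  have hcsq : (|p.1| - (|p.1| + r * |p.2|)) ^ 2 = r ^ 2 * p.2 ^ 2 := by
    have := sq_abs p.2
    nlinarith [sq_abs p.2]
  have hm : ∀ m : ℝ, r * |p.2| - |p.1| ≤ m →
      (max (r * |p.2| - 2 * |p.1|) 0) ^ 2 ≤ (min (|p.1| - m) 0) ^ 2 := by
    intro m hmge
    rcases le_total (r * |p.2| - 2 * |p.1|) 0 with h | h
    · rw [max_eq_right h]
      simpa using sq_nonneg (min (|p.1| - m) 0)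
    · rw [max_eq_left h, min_eq_left (by linarith : |p.1| - m ≤ 0)]
      nlinarith [abs_nonneg p.1]
  have hmge : ∀ x y : ℝ, x - y ≤ |(y - x)| := fun x y => by
    rw [abs_sub_comm]; exact le_abs_self _
  rcases abs_pair p.1 (r * p.2) with ⟨hA, hB⟩ | ⟨hA, hB⟩
  · rw [hA, hB, habs2, min_eq_left hc, hcsq]
    have := hm (|(|p.1| - r * |p.2|)|) (by simpa using hmge (r * |p.2|) (|p.1|))
    linarith
  · rw [hA, hB, habs2, min_eq_left hc, hcsq]
    have := hm (|(|p.1| - r * |p.2|)|) (by simpa using hmge (r * |p.2|) (|p.1|))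
    linarith

lemma two_cd_ge_box (s r : ℝ) (hr : 0 ≤ r) (hs : 1 ≤ |s|) :
    (|s| - 1) ^ 2 + r ^ 2 ≤ 2 * cd s r := by
  rw [cd_two_mul]
  have hlhs : Integrable (fun p : ℝ × ℝ => (|s| - 1) ^ 2 * p.1 ^ 2 + r ^ 2 * p.2 ^ 2)
      (stdGaussian.prod stdGaussian) :=
    (integrable_fst_sq.const_mul _).add (integrable_snd_sq.const_mul _)
  have h := integral_mono hlhs ((integrable_F s r).add (integrable_F_neg s r))
    (pair_lower_box s r hr hs)
  rw [integral_add (integrable_fst_sq.const_mul _) (integrable_snd_sq.const_mul _),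
    integral_const_mul, integral_const_mul, integral_fst_sq, integral_snd_sq] at h
  calc (|s| - 1) ^ 2 + r ^ 2 = (|s| - 1) ^ 2 * 1 + r ^ 2 * 1 := by ring
    _ ≤ _ := h

lemma integrable_pospart (r : ℝ) (hr : 0 ≤ r) :
    Integrable (fun p : ℝ × ℝ => (max (r * |p.2| - 2 * |p.1|) 0) ^ 2)
      (stdGaussian.prod stdGaussian) := by
  have hcont : Continuous (fun p : ℝ × ℝ => (max (r * |p.2| - 2 * |p.1|) 0) ^ 2) := by
    fun_prop
  refine (integrable_snd_sq.const_mul (r ^ 2)).mono hcont.aestronglyMeasurable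
    (Filter.Eventually.of_forall fun p => ?_)
  rw [Real.norm_of_nonneg (sq_nonneg _), Real.norm_of_nonneg (by positivity)]
  rcases le_total (r * |p.2| - 2 * |p.1|) 0 with h | h
  · rw [max_eq_right h]
    simpa using (by positivity : (0:ℝ) ≤ r ^ 2 * p.2 ^ 2)
  · rw [max_eq_left h]
    nlinarith [abs_nonneg p.1, abs_nonneg p.2, sq_abs p.2]

lemma two_cd_one_ge (r : ℝ) (hr : 0 ≤ r) :
    r ^ 2 + (∫ p : ℝ × ℝ, (max (r * |p.2| - 2 * |p.1|) 0) ^ 2 ∂(stdGaussian.prod stdGaussian))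
      ≤ 2 * cd 1 r := by
  rw [cd_two_mul]
  have hlhs : Integrable (fun p : ℝ × ℝ =>
      r ^ 2 * p.2 ^ 2 + (max (r * |p.2| - 2 * |p.1|) 0) ^ 2) (stdGaussian.prod stdGaussian) :=
    (integrable_snd_sq.const_mul _).add (integrable_pospart r hr)
  have h := integral_mono hlhs ((integrable_F 1 r).add (integrable_F_neg 1 r))
    (pair_lower_one r hr)
  rw [integral_add (integrable_snd_sq.const_mul _) (integrable_pospart r hr),
    integral_const_mul, integral_snd_sq] at h
  calc r ^ 2 + _ = r ^ 2 * 1 + _ := by ring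
    _ ≤ _ := h

lemma stdGaussian_pos_of_open {U : Set ℝ} (hU : IsOpen U) (hne : U.Nonempty) :
    0 < stdGaussian U := by
  rcases eq_or_ne (stdGaussian U) 0 with h | h
  · exfalso
    have habs := gaussianReal_absolutelyContinuous' 0 (one_ne_zero (α := ℝ≥0))
    have : (volume : Measure ℝ) U = 0 := habs h
    exact (hU.measure_ne_zero volume hne) this
  · exact lt_of_le_of_ne (by simp) (Ne.symm h)

lemma pospart_integral_pos (r : ℝ) (hr : 0 < r) :
    0 < ∫ p : ℝ × ℝ, (max (r * |p.2| - 2 * |p.1|) 0) ^ 2 ∂(stdGaussian.prod stdGaussian) := by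
  rw [integral_pos_iff_support_of_nonneg (fun p => sq_nonneg _) (integrable_pospart r hr.le)]
  have hsub : (Set.Ioo (-(r/4)) (r/4)) ×ˢ (Set.Ioi (1:ℝ))
      ⊆ Function.support (fun p : ℝ × ℝ => (max (r * |p.2| - 2 * |p.1|) 0) ^ 2) := by
    rintro ⟨q, g⟩ ⟨hq, hg⟩
    simp only [Set.mem_Ioo] at hq
    simp only [Set.mem_Ioi] at hg
    have hq' : |q| < r / 4 := abs_lt.mpr ⟨hq.1, hq.2⟩
    have hg' : 1 < |g| := lt_of_lt_of_le hg (le_abs_self g)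
    have hpos : 0 < r * |g| - 2 * |q| := by nlinarith
    have : (max (r * |g| - 2 * |q|) 0) ^ 2 = (r * |g| - 2 * |q|) ^ 2 := by
      rw [max_eq_left hpos.le]
    simp only [Function.mem_support]
    intro hzero
    rw [this] at hzero
    exact (pow_ne_zero 2 (ne_of_gt hpos)) hzero
  calc (0 : ℝ≥0∞) < stdGaussian (Set.Ioo (-(r/4)) (r/4)) * stdGaussian (Set.Ioi (1:ℝ)) := by
        refine ENNReal.mul_pos ?_ ?_
        · exact (stdGaussian_pos_of_open isOpen_Ioo
            (by rw [Set.nonempty_Ioo]; linarith)).ne'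
        · exact (stdGaussian_pos_of_open isOpen_Ioi (Set.nonempty_Ioi)).ne'
    _ = (stdGaussian.prod stdGaussian) ((Set.Ioo (-(r/4)) (r/4)) ×ˢ (Set.Ioi (1:ℝ))) :=
        (Measure.prod_prod _ _).symm
    _ ≤ _ := measure_mono hsub

lemma Dfeas_bound {α : ℝ} (hα : 1 < α) {p : ℝ × ℝ} (hp : p ∈ Dfeas α) :
    p.1 ^ 2 + p.2 ^ 2 ≤ (2 * α / (α - 1)) ^ 2 := by
  obtain ⟨hr, hfeas⟩ := hp
  have hβ : 0 < α - 1 := by linarith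
  have hα0 : 0 < α := by linarith
  set ε : ℝ := (α - 1) / (2 * α) with hε
  have hεpos : 0 < ε := by positivity
  have h1 := cd_lower p.1 p.2 ε hεpos
  have h2 : α * ((1 - ε) * (p.2 ^ 2 + p.1 ^ 2) - 1 / ε) ≤ α * cd p.1 p.2 :=
    mul_le_mul_of_nonneg_left h1 hα0.le
  have hA : α * (1 - ε) = (α + 1) / 2 := by
    rw [hε]; field_simp; ring
  have hB : α * (1 / ε) = 2 * α ^ 2 / (α - 1) := by
    rw [hε]; field_simp
  have h3 : (α + 1) / 2 * (p.2 ^ 2 + p.1 ^ 2) - 2 * α ^ 2 / (α - 1) ≤ p.2 ^ 2 := by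
    calc (α + 1) / 2 * (p.2 ^ 2 + p.1 ^ 2) - 2 * α ^ 2 / (α - 1)
        = α * ((1 - ε) * (p.2 ^ 2 + p.1 ^ 2) - 1 / ε) := by
          rw [mul_sub, ← mul_assoc, hA, hB]
      _ ≤ α * cd p.1 p.2 := h2
      _ ≤ p.2 ^ 2 := hfeas
  have h4 : (α - 1) / 2 * (p.1 ^ 2 + p.2 ^ 2) ≤ 2 * α ^ 2 / (α - 1) := by
    nlinarith [sq_nonneg p.1, sq_nonneg p.2]
  have h5 := mul_le_mul_of_nonneg_left h4 (le_of_lt (show (0:ℝ) < 2 / (α - 1) by positivity))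
  calc p.1 ^ 2 + p.2 ^ 2
      = 2 / (α - 1) * ((α - 1) / 2 * (p.1 ^ 2 + p.2 ^ 2)) := by field_simp
    _ ≤ 2 / (α - 1) * (2 * α ^ 2 / (α - 1)) := h5
    _ = (2 * α / (α - 1)) ^ 2 := by field_simp

/-- **Lemma (P.2).** For `α > 1`, `D_feas` is compact and contains `[-1,1] × {0}`;
for `α ≥ 2` it is contained in a box `[-1,1] × [0,z]` with `z > 0`, and its
intersection with the line `s = 1` is exactly `{(1,0)}`. -/
theorem stmt2 (α : ℝ) (hα : 1 < α) :
    IsCompact (Dfeas α) ∧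
    (Set.Icc (-1 : ℝ) 1 ×ˢ ({0} : Set ℝ)) ⊆ Dfeas α ∧
    (2 ≤ α →
      (∃ z : ℝ, 0 < z ∧ Dfeas α ⊆ Set.Icc (-1 : ℝ) 1 ×ˢ Set.Icc (0 : ℝ) z) ∧
      Dfeas α ∩ {p : ℝ × ℝ | p.1 = 1} = {((1 : ℝ), (0 : ℝ))}) := by
  have hβ : (0:ℝ) < α - 1 := by linarith
  set K : ℝ := 2 * α / (α - 1) with hK
  have hKpos : 0 < K := by positivity
  have habs_bound : ∀ p ∈ Dfeas α, |p.1| ≤ K ∧ |p.2| ≤ K := by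
    intro p hp
    have h := Dfeas_bound hα hp
    constructor
    · have h1 : p.1 ^ 2 ≤ K ^ 2 := by nlinarith [sq_nonneg p.2]
      rw [abs_le]
      constructor <;> nlinarith [sq_nonneg (p.1 + K), sq_nonneg (p.1 - K)]
    · have h1 : p.2 ^ 2 ≤ K ^ 2 := by nlinarith [sq_nonneg p.1]
      rw [abs_le]
      constructor <;> nlinarith [sq_nonneg (p.2 + K), sq_nonneg (p.2 - K)]
  have hclosed : IsClosed (Dfeas α) := by
    have hset : Dfeas α = {p : ℝ × ℝ | 0 ≤ p.2} ∩ {p : ℝ × ℝ | α * cd p.1 p.2 ≤ p.2 ^ 2} := rfl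
    rw [hset]
    exact (isClosed_le continuous_const continuous_snd).inter
      (isClosed_le (continuous_const.mul continuous_cd) (continuous_snd.pow 2))
  have hcompact : IsCompact (Dfeas α) := by
    refine IsCompact.of_isClosed_subset (isCompact_Icc
      (a := ((-K, -K) : ℝ × ℝ)) (b := ((K, K) : ℝ × ℝ))) hclosed ?_
    intro p hp
    obtain ⟨h1, h2⟩ := habs_bound p hp
    rw [abs_le] at h1 h2
    exact ⟨⟨h1.1, h2.1⟩, ⟨h1.2, h2.2⟩⟩
  have hsegment : (Set.Icc (-1 : ℝ) 1 ×ˢ ({0} : Set ℝ)) ⊆ Dfeas α := by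
    rintro ⟨s, r⟩ ⟨hs, hr⟩
    simp only [Set.mem_singleton_iff] at hr
    subst hr
    simp only [Set.mem_Icc] at hs
    refine ⟨le_refl 0, ?_⟩
    rw [cd_zero_of_abs_le s (abs_le.mpr ⟨hs.1, hs.2⟩)]
    norm_num
  refine ⟨hcompact, hsegment, fun hα2 => ⟨⟨K, hKpos, ?_⟩, ?_⟩⟩
  · -- box inclusion for α ≥ 2
    intro p hp
    obtain ⟨hr, hfeas⟩ := hp
    have hcd := cd_nonneg p.1 p.2
    have habs1 : |p.1| ≤ 1 := by
      by_contra hcon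
      push_neg at hcon
      have hs1 : 1 ≤ |p.1| := hcon.le
      have hbox := two_cd_ge_box p.1 p.2 hr hs1
      have h2cd : 2 * cd p.1 p.2 ≤ α * cd p.1 p.2 :=
        mul_le_mul_of_nonneg_right hα2 hcd
      nlinarith
    have hb := (habs_bound p ⟨hr, hfeas⟩).2
    rw [abs_le] at habs1 hb
    exact ⟨⟨habs1.1, habs1.2⟩, ⟨hr, hb.2⟩⟩
  · -- intersection with the line s = 1
    ext p
    simp only [Set.mem_inter_iff, Set.mem_setOf_eq, Set.mem_singleton_iff]
    constructor
    · rintro ⟨⟨hr, hfeas⟩, hs1⟩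
      have hcd := cd_nonneg p.1 p.2
      rw [hs1] at hfeas hcd
      have h2cd : 2 * cd 1 p.2 ≤ α * cd 1 p.2 := mul_le_mul_of_nonneg_right hα2 hcd
      have hone := two_cd_one_ge p.2 hr
      have hI : (∫ q : ℝ × ℝ, (max (p.2 * |q.2| - 2 * |q.1|) 0) ^ 2
          ∂(stdGaussian.prod stdGaussian)) ≤ 0 := by linarith
      have hr0 : p.2 = 0 := by
        by_contra hcon
        have hrpos : 0 < p.2 := lt_of_le_of_ne hr (Ne.symm hcon)
        exact absurd hI (not_le.mpr (pospart_integral_pos p.2 hrpos))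
      exact Prod.ext hs1 hr0
    · rintro rfl
      refine ⟨⟨le_refl 0, ?_⟩, rfl⟩
      rw [show ((1:ℝ), (0:ℝ)).1 = 1 from rfl, show ((1:ℝ), (0:ℝ)).2 = 0 from rfl,
        cd_zero_of_abs_le 1 (by norm_num)]
      norm_num
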